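/- Consider a network of pipe segments, where each segment (i,j) obeys L_ij·(ρ_i' + ρ_j') = −4φ⁻_ij, and where nodal balance holds at every junction with zero net external injection. Then the total line-pack Σ_(i,j) (L_ij A_ij/2)(ρ_i + ρ_j) is constant in time. -/

import Mathlib

/-- For a network of pipe segments obeying the discretized mass balance, with
nodal balance and zero net external injection at every junction, the total
line-pack Σ (L_ij A_ij/2)(ρ_i + ρ_j) is constant in time. -/
theorem stmt_10 {ι : Type*} [Fintype ι] [DecidableEq ι]
    (E : Finset (ι × ι))
    (ρ r : ι → ℝ → ℝ) (φin φout : ι × ι → ℝ → ℝ) (A L : ι × ι → ℝ)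
    (hA : ∀ e ∈ E, 0 < A e) (hL : ∀ e ∈ E, 0 < L e)
    (hderiv : ∀ i, ∀ t, HasDerivAt (ρ i) (r i t) t)
    (hmass : ∀ e ∈ E, ∀ t,
      L e * (r e.1 t + r e.2 t) = -4 * ((φout e t - φin e t) / 2))
    (hnodal : ∀ i : ι, ∀ t : ℝ,
      ∑ e ∈ E.filter (fun e => e.1 = i), A e * φin e t =
      ∑ e ∈ E.filter (fun e => e.2 = i), A e * φout e t) :
    ∀ t₁ t₂ : ℝ,
      ∑ e ∈ E, (L e * A e / 2) * (ρ e.1 t₁ + ρ e.2 t₁) =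
      ∑ e ∈ E, (L e * A e / 2) * (ρ e.1 t₂ + ρ e.2 t₂) := by
  intro t₁ t₂
  set F : ℝ → ℝ := fun t => ∑ e ∈ E, (L e * A e / 2) * (ρ e.1 t + ρ e.2 t) with hF
  have hFd : ∀ t, HasDerivAt F 0 t := by
    intro t
    have h1 : HasDerivAt F
        (∑ e ∈ E, (L e * A e / 2) * (r e.1 t + r e.2 t)) t := by
      apply HasDerivAt.fun_sum
      intro e he
      exact ((hderiv e.1 t).add (hderiv e.2 t)).const_mul _
    have h2 : ∑ e ∈ E, (L e * A e / 2) * (r e.1 t + r e.2 t) = 0 := by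
      have hstep : ∀ e ∈ E, (L e * A e / 2) * (r e.1 t + r e.2 t)
          = A e * φin e t - A e * φout e t := by
        intro e he
        have := hmass e he t
        have hrw : (L e * A e / 2) * (r e.1 t + r e.2 t)
            = (A e / 2) * (L e * (r e.1 t + r e.2 t)) := by ring
        rw [hrw, this]; ring
      rw [Finset.sum_congr rfl hstep, Finset.sum_sub_distrib]
      have hin : ∑ e ∈ E, A e * φin e t
          = ∑ i : ι, ∑ e ∈ E.filter (fun e => e.1 = i), A e * φin e t := by
        rw [← Finset.sum_fiberwise_of_maps_to (fun e _ => Finset.mem_univ e.1)]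
      have hout : ∑ e ∈ E, A e * φout e t
          = ∑ i : ι, ∑ e ∈ E.filter (fun e => e.2 = i), A e * φout e t := by
        rw [← Finset.sum_fiberwise_of_maps_to (fun e _ => Finset.mem_univ e.2)]
      rw [hin, hout, sub_eq_zero]
      exact Finset.sum_congr rfl fun i _ => hnodal i t
    rw [← h2]; exact h1
  have : F t₁ = F t₂ :=
    is_const_of_deriv_eq_zero (fun t => (hFd t).differentiableAt)
      (fun t => (hFd t).deriv) t₁ t₂
  simpa [hF] using this
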